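/- Let P, A, B, F be finite nonempty index types with |A| = |B| = d. Let R be a positive semidefinite complex matrix indexed by (P × A × B × F) × (P × A × B × F). Then the following are equivalent: (i) for every bistochastic channel Choi operator C indexed by (A × B) × (A × B), the link product R * C is positive semidefinite and satisfies Tr_F[R * C] = 1_P (i.e., R * C is the Choi operator of a quantum channel from P to F); (ii) there exist a Hermitian matrix S indexed by P × A × B × F with Tr_F[S] = 0, a Hermitian matrix G indexed by P × A with Tr_A[G] = 0, and a Hermitian matrix H indexed by P × B with Tr_B[H] = 0, such that R = (1/(d·|F|))·1_{P×A×B×F} + S + G̃ ⊗ 1_F + H̃ ⊗ 1_F, where G̃ is the matrix indexed by P × A × B with entries G̃((p,a,b),(p',a',b')) = G((p,a),(p',a'))·δ_{b b'} and H̃ is the matrix indexed by P × A × B with entries H̃((p,a,b),(p',a',b')) = H((p,b),(p',b'))·δ_{a a'}. -/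

import Mathlib

open Matrix ComplexOrder

/-- The link product `R * C` of a matrix `R` on `P × A × B × F` with a matrix `C` on
`A × B`, with entries `(R * C)((p,f),(p',f')) = Σ_{a,b,a',b'} R((p,a,b,f),(p',a',b',f'))
· C((a,b),(a',b'))`. -/
noncomputable def linkPABF {P A B F : Type*} [Fintype A] [Fintype B]
    (R : Matrix (P × A × B × F) (P × A × B × F) ℂ) (C : Matrix (A × B) (A × B) ℂ) :
    Matrix (P × F) (P × F) ℂ :=
  Matrix.of fun (u u' : P × F) =>
    ∑ a : A, ∑ b : B, ∑ a' : A, ∑ b' : B,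
      R (u.1, a, b, u.2) (u'.1, a', b', u'.2) * C (a, b) (a', b')

/- ============ Auxiliary material ============ -/

section Aux

lemma ite_one_swap {α : Type*} [DecidableEq α] (x y : α) :
    (if x = y then (1:ℂ) else 0) = if y = x then 1 else 0 := by
  by_cases h : x = y
  · simp [h]
  · simp [h, Ne.symm h]

lemma ite_pair {α β : Type*} [DecidableEq α] [DecidableEq β] (a c : α) (b e : β) :
    (if a = c ∧ b = e then (1:ℂ) else 0)
      = (if a = c then (1:ℂ) else 0) * (if b = e then (1:ℂ) else 0) := by
  by_cases h1 : a = c <;> by_cases h2 : b = e <;> simp [h1, h2]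

lemma collapse_right {β : Type*} [Fintype β] [DecidableEq β] (b : β) (g : β → ℂ) :
    (∑ e : β, (if b = e then (1:ℂ) else 0) * g e) = g b := by
  simp [ite_mul, Finset.sum_ite_eq]

lemma collapse2 {α β : Type*} [Fintype α] [Fintype β] [DecidableEq α] [DecidableEq β]
    (a : α) (b : β) (g : α → β → ℂ) :
    (∑ c : α, ∑ e : β, ((if a = c then (1:ℂ) else 0) * (if b = e then (1:ℂ) else 0)) * g c e)
      = g a b := by
  simp [ite_mul, Finset.sum_ite_eq]

lemma conj_ite (c : Prop) [Decidable c] :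
    (starRingEnd ℂ) (if c then (1:ℂ) else 0) = if c then 1 else 0 := by
  split <;> simp

lemma sum_swap4 {α β γ δ : Type*} [Fintype α] [Fintype β] [Fintype γ] [Fintype δ]
    (f : α → β → γ → δ → ℂ) :
    (∑ a, ∑ b, ∑ c, ∑ e, f a b c e) = ∑ c, ∑ e, ∑ a, ∑ b, f a b c e := by
  have h1 : (∑ a, ∑ b, ∑ c, ∑ e, f a b c e)
      = ∑ x : α × β × γ × δ, f x.1 x.2.1 x.2.2.1 x.2.2.2 := by
    simp [Fintype.sum_prod_type]
  have h2 : (∑ c, ∑ e, ∑ a, ∑ b, f a b c e)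
      = ∑ x : γ × δ × α × β, f x.2.2.1 x.2.2.2 x.1 x.2.1 := by
    simp [Fintype.sum_prod_type]
  rw [h1, h2]
  exact Fintype.sum_equiv
    ⟨fun x => (x.2.2.1, x.2.2.2, x.1, x.2.1), fun y => (y.2.2.1, y.2.2.2, y.1, y.2.1),
     fun _ => rfl, fun _ => rfl⟩ _ _ (fun _ => rfl)

lemma sum_swap13 {α β γ : Type*} [Fintype α] [Fintype β] [Fintype γ]
    (f : α → β → γ → ℂ) :
    (∑ a, ∑ b, ∑ c, f a b c) = ∑ b, ∑ c, ∑ a, f a b c := by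
  have h1 : (∑ a, ∑ b, ∑ c, f a b c)
      = ∑ x : α × β × γ, f x.1 x.2.1 x.2.2 := by
    simp [Fintype.sum_prod_type]
  have h2 : (∑ b, ∑ c, ∑ a, f a b c)
      = ∑ x : β × γ × α, f x.2.2 x.1 x.2.1 := by
    simp [Fintype.sum_prod_type]
  rw [h1, h2]
  exact Fintype.sum_equiv
    ⟨fun x => (x.2.1, x.2.2, x.1), fun y => (y.2.2, y.1, y.2.1),
     fun _ => rfl, fun _ => rfl⟩ _ _ (fun _ => rfl)

lemma sum_swap15 {M α β γ δ : Type*} [Fintype M] [Fintype α] [Fintype β] [Fintype γ] [Fintype δ]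
    (f : M → α → β → γ → δ → ℂ) :
    (∑ m, ∑ a, ∑ b, ∑ c, ∑ e, f m a b c e) = ∑ a, ∑ b, ∑ c, ∑ e, ∑ m, f m a b c e := by
  have h1 : (∑ m, ∑ a, ∑ b, ∑ c, ∑ e, f m a b c e)
      = ∑ x : M × α × β × γ × δ, f x.1 x.2.1 x.2.2.1 x.2.2.2.1 x.2.2.2.2 := by
    simp [Fintype.sum_prod_type]
  have h2 : (∑ a, ∑ b, ∑ c, ∑ e, ∑ m, f m a b c e)
      = ∑ x : α × β × γ × δ × M, f x.2.2.2.2 x.1 x.2.1 x.2.2.1 x.2.2.2.1 := by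
    simp [Fintype.sum_prod_type]
  rw [h1, h2]
  exact Fintype.sum_equiv
    ⟨fun x => (x.2.1, x.2.2.1, x.2.2.2.1, x.2.2.2.2, x.1),
     fun y => (y.2.2.2.2, y.1, y.2.1, y.2.2.1, y.2.2.2.1),
     fun _ => rfl, fun _ => rfl⟩ _ _ (fun _ => rfl)

lemma sum_swap26 {M K α β γ δ : Type*} [Fintype M] [Fintype K] [Fintype α] [Fintype β]
    [Fintype γ] [Fintype δ] (f : M → K → α → β → γ → δ → ℂ) :
    (∑ m, ∑ k, ∑ a, ∑ b, ∑ c, ∑ e, f m k a b c e)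
      = ∑ a, ∑ b, ∑ c, ∑ e, ∑ m, ∑ k, f m k a b c e := by
  have h1 : (∑ m, ∑ k, ∑ a, ∑ b, ∑ c, ∑ e, f m k a b c e)
      = ∑ x : M × K × α × β × γ × δ, f x.1 x.2.1 x.2.2.1 x.2.2.2.1 x.2.2.2.2.1 x.2.2.2.2.2 := by
    simp [Fintype.sum_prod_type]
  have h2 : (∑ a, ∑ b, ∑ c, ∑ e, ∑ m, ∑ k, f m k a b c e)
      = ∑ x : α × β × γ × δ × M × K, f x.2.2.2.2.1 x.2.2.2.2.2 x.1 x.2.1 x.2.2.1 x.2.2.2.1 := by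
    simp [Fintype.sum_prod_type]
  rw [h1, h2]
  exact Fintype.sum_equiv
    ⟨fun x => (x.2.2.1, x.2.2.2.1, x.2.2.2.2.1, x.2.2.2.2.2, x.1, x.2.1),
     fun y => (y.2.2.2.2.1, y.2.2.2.2.2, y.1, y.2.1, y.2.2.1, y.2.2.2.1),
     fun _ => rfl, fun _ => rfl⟩ _ _ (fun _ => rfl)

/-- partial trace over `F` of `R`, as a 6-argument function. -/
noncomputable def TrF {P A B F : Type*} [Fintype F]
    (R : Matrix (P × A × B × F) (P × A × B × F) ℂ)
    (p : P) (a : A) (b : B) (p' : P) (a' : A) (b' : B) : ℂ :=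
  ∑ f : F, R (p, a, b, f) (p', a', b', f)

/-- the pairing of the partial trace with a matrix on `A × B`. -/
noncomputable def pairSum {P A B : Type*} [Fintype A] [Fintype B]
    (L : P → A → B → P → A → B → ℂ) (C : Matrix (A × B) (A × B) ℂ) (p p' : P) : ℂ :=
  ∑ a : A, ∑ b : B, ∑ c : A, ∑ e : B, L p a b p' c e * C (a, b) (c, e)

lemma trace_link {P A B F : Type*} [Fintype P] [Fintype A] [Fintype B] [Fintype F]
    (R : Matrix (P × A × B × F) (P × A × B × F) ℂ) (C : Matrix (A × B) (A × B) ℂ)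
    (p p' : P) :
    (∑ f : F, linkPABF R C (p, f) (p', f)) = pairSum (TrF R) C p p' := by
  simp only [linkPABF, Matrix.of_apply, pairSum, TrF]
  rw [sum_swap15 (fun (f : F) (a : A) (b : B) (c : A) (e : B) =>
    R (p, a, b, f) (p', c, e, f) * C (a, b) (c, e))]
  exact Finset.sum_congr rfl fun a _ => Finset.sum_congr rfl fun b _ =>
    Finset.sum_congr rfl fun c _ => Finset.sum_congr rfl fun e _ =>
      (Finset.sum_mul _ _ _).symm

lemma link_psd {P A B F : Type*} [Fintype P] [Fintype A] [Fintype B] [Fintype F]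
    (R : Matrix (P × A × B × F) (P × A × B × F) ℂ) (C : Matrix (A × B) (A × B) ℂ)
    (hR : R.PosSemidef) (hC : C.PosSemidef) : (linkPABF R C).PosSemidef := by
  obtain ⟨Q, rfl⟩ : ∃ Q : Matrix (P × A × B × F) (P × A × B × F) ℂ, R = Qᴴ * Q := by
    classical
    open scoped MatrixOrder Matrix.Norms.L2Operator in
    exact CStarAlgebra.nonneg_iff_eq_star_mul_self.mp hR.nonneg
  obtain ⟨D, rfl⟩ : ∃ D : Matrix (A × B) (A × B) ℂ, C = Dᴴ * D := by
    classical
    open scoped MatrixOrder Matrix.Norms.L2Operator in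
    exact CStarAlgebra.nonneg_iff_eq_star_mul_self.mp hC.nonneg
  have key : linkPABF (Qᴴ * Q) (Dᴴ * D) =
      (Matrix.of fun (m : (P × A × B × F) × (A × B)) (u : P × F) =>
        ∑ a : A, ∑ b : B, Q m.1 (u.1, a, b, u.2) * D m.2 (a, b))ᴴ *
      (Matrix.of fun (m : (P × A × B × F) × (A × B)) (u : P × F) =>
        ∑ a : A, ∑ b : B, Q m.1 (u.1, a, b, u.2) * D m.2 (a, b)) := by
    ext u u'
    simp only [linkPABF, Matrix.mul_apply, Matrix.of_apply, conjTranspose_apply]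
    conv_rhs => rw [Fintype.sum_prod_type]
    simp only [star_sum, star_mul', Finset.sum_mul, Finset.mul_sum]
    have swapinner : ∀ (g : A → B → A → B → (A × B) → (P × A × B × F) → ℂ),
        (∑ a, ∑ b, ∑ c, ∑ e, ∑ k, ∑ m, g a b c e k m)
          = ∑ a, ∑ b, ∑ c, ∑ e, ∑ m, ∑ k, g a b c e k m := fun g =>
      Finset.sum_congr rfl fun a _ => Finset.sum_congr rfl fun b _ =>
        Finset.sum_congr rfl fun c _ => Finset.sum_congr rfl fun e _ => Finset.sum_comm
    rw [swapinner, ← sum_swap26 (fun (m : P × A × B × F) (k : A × B) (a : A) (b : B) (c : A) (e : B) =>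
      star (Q m (u.1, a, b, u.2)) * Q m (u'.1, c, e, u'.2) * (star (D k (a, b)) * D k (c, e)))]
    refine Finset.sum_congr rfl fun m _ => Finset.sum_congr rfl fun k _ => ?_
    rw [sum_swap4 (fun (a : A) (b : B) (c : A) (e : B) =>
      star (Q m (u.1, a, b, u.2)) * Q m (u'.1, c, e, u'.2) * (star (D k (a, b)) * D k (c, e)))]
    refine Finset.sum_congr rfl fun c _ => Finset.sum_congr rfl fun e _ =>
      Finset.sum_congr rfl fun a _ => Finset.sum_congr rfl fun b _ => ?_
    ring
  rw [key]
  exact posSemidef_conjTranspose_mul_self _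

lemma psd_perturb {ι : Type*} [Fintype ι] [DecidableEq ι] (Y : Matrix ι ι ℂ) (hY : Y.IsHermitian)
    (c : ℝ) (hc : 0 < c) :
    ∃ ε : ℝ, 0 < ε ∧ ((c : ℂ) • (1 : Matrix ι ι ℂ) + (ε : ℂ) • Y).PosSemidef := by
  classical
  have hy : ∀ i j, (starRingEnd ℂ) (Y i j) = Y j i := fun i j => hY.apply j i
  set K : ℝ := ∑ u : ι, ∑ v : ι, ‖Y u v‖ with hK
  have hK0 : 0 ≤ K := Finset.sum_nonneg fun u _ => Finset.sum_nonneg fun v _ => by positivity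
  refine ⟨c / (K + 1), by positivity, ?_⟩
  set ε : ℝ := c / (K + 1) with hε
  have hε0 : 0 < ε := by positivity
  have hεK : ε * K ≤ c := by
    rw [hε, div_mul_eq_mul_div, div_le_iff₀ (by linarith)]
    nlinarith
  rw [posSemidef_iff_dotProduct_mulVec]
  constructor
  · unfold Matrix.IsHermitian
    rw [conjTranspose_add, conjTranspose_smul, conjTranspose_smul, conjTranspose_one, hY.eq]
    simp [Complex.star_def, Complex.conj_ofReal]
  · intro x
    set n2 : ℝ := ∑ u : ι, Complex.normSq (x u) with hn2
    have hn20 : 0 ≤ n2 := Finset.sum_nonneg fun u _ => Complex.normSq_nonneg _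
    have hxu : ∀ u, ‖x u‖ ≤ Real.sqrt n2 := by
      intro u
      rw [Complex.norm_def]
      exact Real.sqrt_le_sqrt (Finset.single_le_sum
        (f := fun v => Complex.normSq (x v)) (fun v _ => Complex.normSq_nonneg _)
        (Finset.mem_univ u))
    have hxx : star x ⬝ᵥ x = (n2 : ℂ) := by
      simp only [dotProduct, Pi.star_apply, Complex.star_def, hn2]
      push_cast
      exact Finset.sum_congr rfl fun u _ => by rw [mul_comm, Complex.mul_conj]
    set q : ℂ := star x ⬝ᵥ (Y *ᵥ x) with hq
    have hqexp : q = ∑ u, ∑ v, (starRingEnd ℂ) (x u) * Y u v * x v := by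
      rw [hq]
      simp only [dotProduct, mulVec, dotProduct, Pi.star_apply, Complex.star_def, Finset.mul_sum]
      exact Finset.sum_congr rfl fun u _ => Finset.sum_congr rfl fun v _ => by ring
    have hqre : q = (q.re : ℂ) := by
      have hconj : (starRingEnd ℂ) q = q := by
        conv_lhs => rw [hqexp]
        simp only [map_sum, _root_.map_mul, Complex.conj_conj]
        rw [Finset.sum_comm, hqexp]
        refine Finset.sum_congr rfl fun u _ => Finset.sum_congr rfl fun v _ => ?_
        rw [hy]
        ring
      rw [Complex.conj_eq_iff_re.mp hconj]
    have hqabs : ‖q‖ ≤ K * n2 := by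
      rw [hqexp]
      calc ‖∑ u : ι, ∑ v : ι, (starRingEnd ℂ) (x u) * Y u v * x v‖
          ≤ ∑ u : ι, ‖∑ v : ι, (starRingEnd ℂ) (x u) * Y u v * x v‖ :=
            norm_sum_le _ _
        _ ≤ ∑ u : ι, ∑ v : ι, ‖(starRingEnd ℂ) (x u) * Y u v * x v‖ :=
            Finset.sum_le_sum fun u _ => norm_sum_le _ _
        _ ≤ ∑ u : ι, ∑ v : ι, ‖Y u v‖ * n2 := by
            refine Finset.sum_le_sum fun u _ => Finset.sum_le_sum fun v _ => ?_
            rw [norm_mul, norm_mul, Complex.norm_conj]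
            calc ‖x u‖ * ‖Y u v‖ * ‖x v‖
                = ‖Y u v‖ * (‖x u‖ * ‖x v‖) := by ring
              _ ≤ ‖Y u v‖ * n2 := by
                  refine mul_le_mul_of_nonneg_left ?_ (by positivity)
                  calc ‖x u‖ * ‖x v‖
                      ≤ Real.sqrt n2 * Real.sqrt n2 :=
                        mul_le_mul (hxu u) (hxu v) (by positivity) (by positivity)
                    _ = n2 := Real.mul_self_sqrt hn20
        _ = K * n2 := by rw [hK]; simp [Finset.sum_mul]
    have hqlow : -(K * n2) ≤ q.re := by
      have h1 : |q.re| ≤ K * n2 := (Complex.abs_re_le_norm q).trans hqabs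
      linarith [neg_abs_le q.re, abs_le.mp h1]
    rw [add_mulVec, smul_mulVec, smul_mulVec, one_mulVec, dotProduct_add,
      dotProduct_smul, dotProduct_smul, hxx, ← hq, hqre]
    have key : (0:ℝ) ≤ c * n2 + ε * q.re := by nlinarith
    have hcast : (c : ℂ) • (n2 : ℂ) + (ε : ℂ) • ((q.re : ℝ) : ℂ) = ((c * n2 + ε * q.re : ℝ) : ℂ) := by
      push_cast [smul_eq_mul]; ring
    rw [hcast]
    exact Complex.zero_le_real.mpr key


lemma pairSum_split {P A B : Type*} [Fintype A] [Fintype B]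
    (L : P → A → B → P → A → B → ℂ) (C D : Matrix (A × B) (A × B) ℂ) (z : ℂ) (p p' : P) :
    pairSum L (C + z • D) p p' = pairSum L C p p' + z * pairSum L D p p' := by
  have hpt : ∀ a b c e, L p a b p' c e * (C + z • D) (a,b) (c,e)
      = L p a b p' c e * C (a,b) (c,e) + z * (L p a b p' c e * D (a,b) (c,e)) := by
    intro a b c e
    simp only [Matrix.add_apply, Matrix.smul_apply, smul_eq_mul]
    ring
  unfold pairSum
  simp only [hpt, Finset.sum_add_distrib, Finset.mul_sum]

lemma forward_main {P A B F : Type*} [Fintype P] [Fintype A] [Fintype B] [Fintype F]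
    [DecidableEq P] [DecidableEq A] [DecidableEq B] [DecidableEq F]
    [Nonempty A] [Nonempty B]
    (d : ℕ) (hA : Fintype.card A = d) (hB : Fintype.card B = d)
    (R : Matrix (P × A × B × F) (P × A × B × F) ℂ)
    (htr : ∀ C : Matrix (A × B) (A × B) ℂ, C.PosSemidef →
      (∀ a a', (∑ b : B, C (a, b) (a', b)) = if a = a' then 1 else 0) →
      (∀ b b', (∑ a : A, C (a, b) (a, b')) = if b = b' then 1 else 0) →
      ∀ p p' : P, pairSum (TrF R) C p p' = if p = p' then 1 else 0) :
    (∀ p p', (∑ a : A, ∑ b : B, TrF R p a b p' a b) = if p = p' then (d:ℂ) else 0) ∧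
    (∀ p a b p' c e, TrF R p a b p' c e
       = (d:ℂ)⁻¹ * (∑ β : B, TrF R p a β p' c β) * (if b = e then 1 else 0)
       + (d:ℂ)⁻¹ * (∑ α : A, TrF R p α b p' α e) * (if a = c then 1 else 0)
       - (d:ℂ)⁻¹ * (if p = p' then 1 else 0) * (if a = c then 1 else 0)
         * (if b = e then 1 else 0)) := by
  have hdpos : 0 < d := hA ▸ Fintype.card_pos
  have hd0 : (d:ℂ) ≠ 0 := Nat.cast_ne_zero.mpr hdpos.ne'
  have hcast : (((d:ℝ)⁻¹ : ℝ) : ℂ) = (d:ℂ)⁻¹ := by push_cast; ring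
  -- the identity-multiple channel
  have hC0psd : (((d:ℂ))⁻¹ • (1 : Matrix (A × B) (A × B) ℂ)).PosSemidef := by
    obtain ⟨ε, hε, hP⟩ := psd_perturb (0 : Matrix (A × B) (A × B) ℂ)
      (by unfold Matrix.IsHermitian; simp) ((d:ℝ)⁻¹) (by positivity)
    rw [smul_zero, add_zero, hcast] at hP
    exact hP
  have hC0row : ∀ a c, (∑ b : B, (((d:ℂ))⁻¹ • (1 : Matrix (A × B) (A × B) ℂ)) (a,b) (c,b))
      = if a = c then 1 else 0 := by
    intro a c
    simp only [Matrix.smul_apply, Matrix.one_apply, Prod.mk.injEq, and_true, smul_eq_mul]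
    by_cases h : a = c <;> simp [h, Finset.sum_const, Finset.card_univ, hB]
    exact mul_inv_cancel₀ hd0
  have hC0col : ∀ b e, (∑ a : A, (((d:ℂ))⁻¹ • (1 : Matrix (A × B) (A × B) ℂ)) (a,b) (a,e))
      = if b = e then 1 else 0 := by
    intro b e
    simp only [Matrix.smul_apply, Matrix.one_apply, Prod.mk.injEq, true_and, smul_eq_mul]
    by_cases h : b = e <;> simp [h, Finset.sum_const, Finset.card_univ, hA]
    exact mul_inv_cancel₀ hd0
  -- value on the identity channel
  have hC0val : ∀ p p', pairSum (TrF R) (((d:ℂ))⁻¹ • 1) p p'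
      = (d:ℂ)⁻¹ * (∑ a : A, ∑ b : B, TrF R p a b p' a b) := by
    intro p p'
    unfold pairSum
    rw [Finset.mul_sum]
    refine Finset.sum_congr rfl fun a _ => ?_
    rw [Finset.mul_sum]
    refine Finset.sum_congr rfl fun b _ => ?_
    rw [← collapse2 a b (fun c e => (d:ℂ)⁻¹ * TrF R p a b p' c e)]
    refine Finset.sum_congr rfl fun c _ => Finset.sum_congr rfl fun e _ => ?_
    simp only [Matrix.smul_apply, Matrix.one_apply, Prod.mk.injEq, smul_eq_mul]
    rw [ite_pair]
    ring
  have ht : ∀ p p', (∑ a : A, ∑ b : B, TrF R p a b p' a b) = if p = p' then (d:ℂ) else 0 := by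
    intro p p'
    have h0 := htr _ hC0psd hC0row hC0col p p'
    rw [hC0val p p'] at h0
    by_cases hp : p = p'
    · simp only [hp, if_true, eq_self_iff_true] at h0 ⊢
      field_simp at h0
      linear_combination h0
    · simp only [hp, if_neg hp, if_false] at h0 ⊢
      exact (mul_eq_zero.mp h0).resolve_left (inv_ne_zero hd0)
  refine ⟨ht, ?_⟩
  -- the key vanishing property
  have key : ∀ Y : Matrix (A × B) (A × B) ℂ, Y.IsHermitian →
      (∀ a c, (∑ b : B, Y (a,b) (c,b)) = 0) → (∀ b e, (∑ a : A, Y (a,b) (a,e)) = 0) →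
      ∀ p p', pairSum (TrF R) Y p p' = 0 := by
    intro Y hY hYrow hYcol p p'
    obtain ⟨ε, hε0, hP⟩ := psd_perturb Y hY ((d:ℝ)⁻¹) (by positivity)
    rw [hcast] at hP
    have hCmrow : ∀ a c, (∑ b : B, ((d:ℂ)⁻¹ • (1 : Matrix (A × B) (A × B) ℂ)
        + (ε:ℂ) • Y) (a,b) (c,b)) = if a = c then 1 else 0 := by
      intro a c
      simp only [Matrix.add_apply, Matrix.smul_apply, smul_eq_mul, Finset.sum_add_distrib]
      rw [← Finset.mul_sum, ← Finset.mul_sum, hYrow a c, mul_zero, add_zero]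
      simpa [Matrix.smul_apply, smul_eq_mul, ← Finset.mul_sum] using hC0row a c
    have hCmcol : ∀ b e, (∑ a : A, ((d:ℂ)⁻¹ • (1 : Matrix (A × B) (A × B) ℂ)
        + (ε:ℂ) • Y) (a,b) (a,e)) = if b = e then 1 else 0 := by
      intro b e
      simp only [Matrix.add_apply, Matrix.smul_apply, smul_eq_mul, Finset.sum_add_distrib]
      rw [← Finset.mul_sum, ← Finset.mul_sum, hYcol b e, mul_zero, add_zero]
      simpa [Matrix.smul_apply, smul_eq_mul, ← Finset.mul_sum] using hC0col b e
    have h1 := htr _ hP hCmrow hCmcol p p'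
    have h0 := htr _ hC0psd hC0row hC0col p p'
    rw [pairSum_split (TrF R) ((d:ℂ)⁻¹ • 1) Y (ε:ℂ) p p', h0] at h1
    have hz : (ε:ℂ) * pairSum (TrF R) Y p p' = 0 := by linear_combination h1
    exact (mul_eq_zero.mp hz).resolve_left (Complex.ofReal_ne_zero.mpr hε0.ne')
  -- the deviation Z
  set Z : P → A → B → P → A → B → ℂ := fun p a b p' c e =>
    TrF R p a b p' c e
    - (d:ℂ)⁻¹ * (∑ β : B, TrF R p a β p' c β) * (if b = e then 1 else 0)
    - (d:ℂ)⁻¹ * (∑ α : A, TrF R p α b p' α e) * (if a = c then 1 else 0)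
    + (d:ℂ)⁻¹ * (if p = p' then 1 else 0) * (if a = c then 1 else 0)
      * (if b = e then 1 else 0) with hZdef
  have hZrow : ∀ p p' a c, (∑ b : B, Z p a b p' c b) = 0 := by
    intro p p' a c
    simp only [hZdef, eq_self_iff_true, if_true, mul_one]
    rw [Finset.sum_add_distrib, Finset.sum_sub_distrib, Finset.sum_sub_distrib]
    have e1 : (∑ _x : B, ((d:ℂ)⁻¹ * ∑ β : B, TrF R p a β p' c β))
        = ∑ β : B, TrF R p a β p' c β := by
      rw [Finset.sum_const, Finset.card_univ, hB, nsmul_eq_mul, ← mul_assoc,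
        mul_inv_cancel₀ hd0, one_mul]
    have e2 : (∑ x : B, ((d:ℂ)⁻¹ * ∑ α : A, TrF R p α x p' α x) * (if a = c then 1 else 0))
        = (if p = p' then 1 else 0) * (if a = c then 1 else 0) := by
      rw [← Finset.sum_mul, ← Finset.mul_sum, Finset.sum_comm, ht p p']
      by_cases hp : p = p' <;> simp [hp, inv_mul_cancel₀ hd0]
    have e3 : (∑ _x : B, (((d:ℂ)⁻¹ * if p = p' then 1 else 0) * if a = c then 1 else 0))
        = (if p = p' then 1 else 0) * (if a = c then 1 else 0) := by
      rw [Finset.sum_const, Finset.card_univ, hB, nsmul_eq_mul,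
        show ((d:ℂ) * (((d:ℂ)⁻¹ * if p = p' then 1 else 0) * if a = c then 1 else 0))
          = ((d:ℂ) * (d:ℂ)⁻¹) * ((if p = p' then 1 else 0) * (if a = c then 1 else 0)) by ring,
        mul_inv_cancel₀ hd0, one_mul]
    rw [e1, e2, e3]
    ring
  have hZcol : ∀ p p' b e, (∑ a : A, Z p a b p' a e) = 0 := by
    intro p p' b e
    simp only [hZdef, eq_self_iff_true, if_true, mul_one]
    rw [Finset.sum_add_distrib, Finset.sum_sub_distrib, Finset.sum_sub_distrib]
    have e1 : (∑ x : A, ((d:ℂ)⁻¹ * ∑ β : B, TrF R p x β p' x β) * (if b = e then 1 else 0))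
        = (if p = p' then 1 else 0) * (if b = e then 1 else 0) := by
      rw [← Finset.sum_mul, ← Finset.mul_sum, ht p p']
      by_cases hp : p = p' <;> simp [hp, inv_mul_cancel₀ hd0]
    have e2 : (∑ _x : A, ((d:ℂ)⁻¹ * ∑ α : A, TrF R p α b p' α e))
        = ∑ α : A, TrF R p α b p' α e := by
      rw [Finset.sum_const, Finset.card_univ, hA, nsmul_eq_mul, ← mul_assoc,
        mul_inv_cancel₀ hd0, one_mul]
    have e3 : (∑ _x : A, (((d:ℂ)⁻¹ * if p = p' then 1 else 0) * if b = e then 1 else 0))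
        = (if p = p' then 1 else 0) * (if b = e then 1 else 0) := by
      rw [Finset.sum_const, Finset.card_univ, hA, nsmul_eq_mul,
        show ((d:ℂ) * (((d:ℂ)⁻¹ * if p = p' then 1 else 0) * if b = e then 1 else 0))
          = ((d:ℂ) * (d:ℂ)⁻¹) * ((if p = p' then 1 else 0) * (if b = e then 1 else 0)) by ring,
        mul_inv_cancel₀ hd0, one_mul]
    rw [e1, e2, e3]
    ring
  -- Z vanishes
  have hZ0 : ∀ p p' a b c e, Z p a b p' c e = 0 := by
    intro p p'
    have czrow : ∀ a c, (∑ b : B, (starRingEnd ℂ) (Z p a b p' c b)) = 0 := by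
      intro a c
      rw [← map_sum, hZrow p p' a c, map_zero]
    have czcol : ∀ b e, (∑ a : A, (starRingEnd ℂ) (Z p a b p' a e)) = 0 := by
      intro b e
      rw [← map_sum, hZcol p p' b e, map_zero]
    set W : Matrix (A × B) (A × B) ℂ := Matrix.of fun u v => Z p u.1 u.2 p' v.1 v.2 with hW
    set Y1 : Matrix (A × B) (A × B) ℂ :=
      Matrix.of fun u v => (2:ℂ)⁻¹ * ((starRingEnd ℂ) (W u v) + W v u) with hY1
    set Y2 : Matrix (A × B) (A × B) ℂ :=
      Matrix.of fun u v => (2 * Complex.I)⁻¹ * ((starRingEnd ℂ) (W u v) - W v u) with hY2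
    have hY1h : Y1.IsHermitian := by
      unfold Matrix.IsHermitian
      ext u v
      simp only [conjTranspose_apply, hY1, Matrix.of_apply, Complex.star_def, _root_.map_mul,
        map_add, map_inv₀, Complex.conj_conj, map_ofNat]
      ring
    have hY2h : Y2.IsHermitian := by
      unfold Matrix.IsHermitian
      ext u v
      simp only [conjTranspose_apply, hY2, Matrix.of_apply, Complex.star_def, _root_.map_mul,
        map_sub, map_inv₀, Complex.conj_conj, map_ofNat, Complex.conj_I]
      rw [show ((2:ℂ) * -Complex.I)⁻¹ = -((2 * Complex.I)⁻¹) by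
        rw [show ((2:ℂ) * -Complex.I) = -(2 * Complex.I) by ring, inv_neg]]
      ring
    have hY1row : ∀ a c, (∑ b : B, Y1 (a,b) (c,b)) = 0 := by
      intro a c
      simp only [hY1, hW, Matrix.of_apply]
      rw [← Finset.mul_sum, Finset.sum_add_distrib, czrow a c, hZrow p p' c a, add_zero, mul_zero]
    have hY1col : ∀ b e, (∑ a : A, Y1 (a,b) (a,e)) = 0 := by
      intro b e
      simp only [hY1, hW, Matrix.of_apply]
      rw [← Finset.mul_sum, Finset.sum_add_distrib, czcol b e, hZcol p p' e b, add_zero, mul_zero]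
    have hY2row : ∀ a c, (∑ b : B, Y2 (a,b) (c,b)) = 0 := by
      intro a c
      simp only [hY2, hW, Matrix.of_apply]
      rw [← Finset.mul_sum, Finset.sum_sub_distrib, czrow a c, hZrow p p' c a, sub_zero, mul_zero]
    have hY2col : ∀ b e, (∑ a : A, Y2 (a,b) (a,e)) = 0 := by
      intro b e
      simp only [hY2, hW, Matrix.of_apply]
      rw [← Finset.mul_sum, Finset.sum_sub_distrib, czcol b e, hZcol p p' e b, sub_zero, mul_zero]
    have k1 := key Y1 hY1h hY1row hY1col p p'
    have k2 := key Y2 hY2h hY2row hY2col p p'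
    have hI : Complex.I * (2 * Complex.I)⁻¹ = (2:ℂ)⁻¹ := by
      rw [mul_inv, show Complex.I * ((2:ℂ)⁻¹ * Complex.I⁻¹)
          = (Complex.I * Complex.I⁻¹) * (2:ℂ)⁻¹ by ring,
        mul_inv_cancel₀ Complex.I_ne_zero, one_mul]
    have hptw : ∀ a b c e, (starRingEnd ℂ) (Z p a b p' c e)
        = Y1 (a,b) (c,e) + Complex.I * Y2 (a,b) (c,e) := by
      intro a b c e
      simp only [hY1, hY2, hW, Matrix.of_apply]
      calc (starRingEnd ℂ) (Z p a b p' c e)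
          = (2:ℂ)⁻¹ * ((starRingEnd ℂ) (Z p a b p' c e) + Z p c e p' a b)
            + (Complex.I * (2 * Complex.I)⁻¹)
              * ((starRingEnd ℂ) (Z p a b p' c e) - Z p c e p' a b) := by
            rw [hI]; ring
        _ = _ := by ring
    have hczero : (∑ a : A, ∑ b : B, ∑ c : A, ∑ e : B,
        TrF R p a b p' c e * (starRingEnd ℂ) (Z p a b p' c e)) = 0 := by
      have expand : ∀ a b c e, TrF R p a b p' c e * (starRingEnd ℂ) (Z p a b p' c e)
          = TrF R p a b p' c e * Y1 (a,b) (c,e)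
            + Complex.I * (TrF R p a b p' c e * Y2 (a,b) (c,e)) := by
        intro a b c e
        rw [hptw a b c e]
        ring
      calc (∑ a : A, ∑ b : B, ∑ c : A, ∑ e : B,
          TrF R p a b p' c e * (starRingEnd ℂ) (Z p a b p' c e))
          = (∑ a : A, ∑ b : B, ∑ c : A, ∑ e : B, TrF R p a b p' c e * Y1 (a,b) (c,e))
            + (∑ a : A, ∑ b : B, ∑ c : A, ∑ e : B,
              Complex.I * (TrF R p a b p' c e * Y2 (a,b) (c,e))) := by
            simp only [expand, Finset.sum_add_distrib]
        _ = pairSum (TrF R) Y1 p p' + Complex.I * pairSum (TrF R) Y2 p p' := by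
            unfold pairSum
            simp only [Finset.mul_sum]
        _ = 0 := by rw [k1, k2]; ring
    have h2 : (∑ a : A, ∑ b : B, ∑ c : A, ∑ e : B,
        ((d:ℂ)⁻¹ * (∑ β : B, TrF R p a β p' c β) * (if b = e then 1 else 0))
          * (starRingEnd ℂ) (Z p a b p' c e)) = 0 := by
      refine Finset.sum_eq_zero fun a _ => ?_
      rw [Finset.sum_comm]
      refine Finset.sum_eq_zero fun c _ => ?_
      have inner : ∀ b : B, (∑ e : B,
          ((d:ℂ)⁻¹ * (∑ β : B, TrF R p a β p' c β) * (if b = e then 1 else 0))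
            * (starRingEnd ℂ) (Z p a b p' c e))
          = (d:ℂ)⁻¹ * (∑ β : B, TrF R p a β p' c β) * (starRingEnd ℂ) (Z p a b p' c b) := by
        intro b
        rw [← collapse_right b (fun e => (d:ℂ)⁻¹ * (∑ β : B, TrF R p a β p' c β)
          * (starRingEnd ℂ) (Z p a b p' c e))]
        exact Finset.sum_congr rfl fun e _ => by ring
      calc (∑ b : B, ∑ e : B,
          ((d:ℂ)⁻¹ * (∑ β : B, TrF R p a β p' c β) * (if b = e then 1 else 0))
            * (starRingEnd ℂ) (Z p a b p' c e))
          = ∑ b : B, (d:ℂ)⁻¹ * (∑ β : B, TrF R p a β p' c β)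
              * (starRingEnd ℂ) (Z p a b p' c b) :=
            Finset.sum_congr rfl fun b _ => inner b
        _ = (d:ℂ)⁻¹ * (∑ β : B, TrF R p a β p' c β)
              * ∑ b : B, (starRingEnd ℂ) (Z p a b p' c b) := by
            rw [← Finset.mul_sum]
        _ = 0 := by rw [czrow a c, mul_zero]
    have h3 : (∑ a : A, ∑ b : B, ∑ c : A, ∑ e : B,
        ((d:ℂ)⁻¹ * (∑ α : A, TrF R p α b p' α e) * (if a = c then 1 else 0))
          * (starRingEnd ℂ) (Z p a b p' c e)) = 0 := by
      have step1 : ∀ (a : A) (b : B), (∑ c : A, ∑ e : B,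
          ((d:ℂ)⁻¹ * (∑ α : A, TrF R p α b p' α e) * (if a = c then 1 else 0))
            * (starRingEnd ℂ) (Z p a b p' c e))
          = ∑ e : B, (d:ℂ)⁻¹ * (∑ α : A, TrF R p α b p' α e)
              * (starRingEnd ℂ) (Z p a b p' a e) := by
        intro a b
        rw [Finset.sum_comm]
        refine Finset.sum_congr rfl fun e _ => ?_
        rw [← collapse_right a (fun c => (d:ℂ)⁻¹ * (∑ α : A, TrF R p α b p' α e)
          * (starRingEnd ℂ) (Z p a b p' c e))]
        exact Finset.sum_congr rfl fun c _ => by ring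
      calc (∑ a : A, ∑ b : B, ∑ c : A, ∑ e : B,
          ((d:ℂ)⁻¹ * (∑ α : A, TrF R p α b p' α e) * (if a = c then 1 else 0))
            * (starRingEnd ℂ) (Z p a b p' c e))
          = ∑ a : A, ∑ b : B, ∑ e : B, (d:ℂ)⁻¹ * (∑ α : A, TrF R p α b p' α e)
              * (starRingEnd ℂ) (Z p a b p' a e) :=
            Finset.sum_congr rfl fun a _ => Finset.sum_congr rfl fun b _ => step1 a b
        _ = ∑ b : B, ∑ e : B, ∑ a : A, (d:ℂ)⁻¹ * (∑ α : A, TrF R p α b p' α e)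
              * (starRingEnd ℂ) (Z p a b p' a e) :=
            sum_swap13 (fun (a : A) (b : B) (e : B) => (d:ℂ)⁻¹ * (∑ α : A, TrF R p α b p' α e)
              * (starRingEnd ℂ) (Z p a b p' a e))
        _ = 0 := by
            refine Finset.sum_eq_zero fun b _ => Finset.sum_eq_zero fun e _ => ?_
            rw [← Finset.mul_sum, czcol b e, mul_zero]
    have h4 : (∑ a : A, ∑ b : B, ∑ c : A, ∑ e : B,
        ((d:ℂ)⁻¹ * (if p = p' then 1 else 0) * (if a = c then 1 else 0)
          * (if b = e then 1 else 0)) * (starRingEnd ℂ) (Z p a b p' c e)) = 0 := by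
      have step1 : ∀ (a : A) (b : B), (∑ c : A, ∑ e : B,
          ((d:ℂ)⁻¹ * (if p = p' then 1 else 0) * (if a = c then 1 else 0)
            * (if b = e then 1 else 0)) * (starRingEnd ℂ) (Z p a b p' c e))
          = (d:ℂ)⁻¹ * (if p = p' then 1 else 0) * (starRingEnd ℂ) (Z p a b p' a b) := by
        intro a b
        rw [← collapse2 a b (fun c e => (d:ℂ)⁻¹ * (if p = p' then 1 else 0)
          * (starRingEnd ℂ) (Z p a b p' c e))]
        exact Finset.sum_congr rfl fun c _ => Finset.sum_congr rfl fun e _ => by ring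
      calc (∑ a : A, ∑ b : B, ∑ c : A, ∑ e : B,
          ((d:ℂ)⁻¹ * (if p = p' then 1 else 0) * (if a = c then 1 else 0)
            * (if b = e then 1 else 0)) * (starRingEnd ℂ) (Z p a b p' c e))
          = ∑ a : A, ∑ b : B, (d:ℂ)⁻¹ * (if p = p' then 1 else 0)
              * (starRingEnd ℂ) (Z p a b p' a b) :=
            Finset.sum_congr rfl fun a _ => Finset.sum_congr rfl fun b _ => step1 a b
        _ = 0 := by
            refine Finset.sum_eq_zero fun a _ => ?_
            rw [← Finset.mul_sum, czrow a a, mul_zero]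
    have hZZ : (∑ a : A, ∑ b : B, ∑ c : A, ∑ e : B,
        Z p a b p' c e * (starRingEnd ℂ) (Z p a b p' c e)) = 0 := by
      have expand : ∀ a b c e, Z p a b p' c e * (starRingEnd ℂ) (Z p a b p' c e)
          = TrF R p a b p' c e * (starRingEnd ℂ) (Z p a b p' c e)
            - ((d:ℂ)⁻¹ * (∑ β : B, TrF R p a β p' c β) * (if b = e then 1 else 0))
              * (starRingEnd ℂ) (Z p a b p' c e)
            - ((d:ℂ)⁻¹ * (∑ α : A, TrF R p α b p' α e) * (if a = c then 1 else 0))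
              * (starRingEnd ℂ) (Z p a b p' c e)
            + ((d:ℂ)⁻¹ * (if p = p' then 1 else 0) * (if a = c then 1 else 0)
              * (if b = e then 1 else 0)) * (starRingEnd ℂ) (Z p a b p' c e) := by
        intro a b c e
        conv_lhs => rw [hZdef]
        ring
      simp only [expand, Finset.sum_add_distrib, Finset.sum_sub_distrib]
      rw [hczero, h2, h3, h4]
      ring
    intro a b c e
    have h1 : (∑ a : A, ∑ b : B, ∑ c : A, ∑ e : B,
        ((Complex.normSq (Z p a b p' c e) : ℝ) : ℂ)) = 0 := by
      rw [← hZZ]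
      exact Finset.sum_congr rfl fun a _ => Finset.sum_congr rfl fun b _ =>
        Finset.sum_congr rfl fun c _ => Finset.sum_congr rfl fun e _ =>
          (Complex.mul_conj _).symm
    have h2' : (∑ x : A × B × A × B,
        ((Complex.normSq (Z p x.1 x.2.1 p' x.2.2.1 x.2.2.2) : ℝ) : ℂ)) = 0 := by
      rw [show (∑ x : A × B × A × B,
          ((Complex.normSq (Z p x.1 x.2.1 p' x.2.2.1 x.2.2.2) : ℝ) : ℂ))
          = ∑ a : A, ∑ b : B, ∑ c : A, ∑ e : B,
            ((Complex.normSq (Z p a b p' c e) : ℝ) : ℂ) from by simp [Fintype.sum_prod_type]]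
      exact h1
    have hflat : (∑ x : A × B × A × B,
        Complex.normSq (Z p x.1 x.2.1 p' x.2.2.1 x.2.2.2)) = 0 := by
      exact_mod_cast h2'
    have hx := (Finset.sum_eq_zero_iff_of_nonneg
      (fun x _ => Complex.normSq_nonneg _)).mp hflat (a,b,c,e) (Finset.mem_univ _)
    exact Complex.normSq_eq_zero.mp hx
  intro p a b p' c e
  have := hZ0 p p' a b c e
  simp only [hZdef] at this
  linear_combination this

end Aux

theorem stmt3 {P A B F : Type*} [Fintype P] [Fintype A] [Fintype B] [Fintype F]
    [DecidableEq P] [DecidableEq A] [DecidableEq B] [DecidableEq F]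
    [Nonempty P] [Nonempty A] [Nonempty B] [Nonempty F]
    (d : ℕ) (hA : Fintype.card A = d) (hB : Fintype.card B = d)
    (R : Matrix (P × A × B × F) (P × A × B × F) ℂ) (hR : R.PosSemidef) :
    (∀ C : Matrix (A × B) (A × B) ℂ, C.PosSemidef →
      (∀ a a', (∑ b : B, C (a, b) (a', b)) = if a = a' then 1 else 0) →
      (∀ b b', (∑ a : A, C (a, b) (a, b')) = if b = b' then 1 else 0) →
      (linkPABF R C).PosSemidef ∧
      (∀ p p' : P, (∑ f : F, linkPABF R C (p, f) (p', f)) = if p = p' then 1 else 0)) ↔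
    ∃ (S : Matrix (P × A × B × F) (P × A × B × F) ℂ)
      (G : Matrix (P × A) (P × A) ℂ) (H : Matrix (P × B) (P × B) ℂ),
      S.IsHermitian ∧
      (∀ p a b p' a' b', (∑ f : F, S (p, a, b, f) (p', a', b', f)) = 0) ∧
      G.IsHermitian ∧
      (∀ p p', (∑ a : A, G (p, a) (p', a)) = 0) ∧
      H.IsHermitian ∧
      (∀ p p', (∑ b : B, H (p, b) (p', b)) = 0) ∧
      R = ((d : ℂ) * (Fintype.card F : ℂ))⁻¹ • 1 + S +
        Matrix.of (fun (u u' : P × A × B × F) =>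
          G (u.1, u.2.1) (u'.1, u'.2.1) *
            (if u.2.2.1 = u'.2.2.1 then 1 else 0) * (if u.2.2.2 = u'.2.2.2 then 1 else 0)) +
        Matrix.of (fun (u u' : P × A × B × F) =>
          H (u.1, u.2.2.1) (u'.1, u'.2.2.1) *
            (if u.2.1 = u'.2.1 then 1 else 0) * (if u.2.2.2 = u'.2.2.2 then 1 else 0)) := by
  constructor
  · intro hyp
    have htr' : ∀ C : Matrix (A × B) (A × B) ℂ, C.PosSemidef →
        (∀ a a', (∑ b : B, C (a, b) (a', b)) = if a = a' then 1 else 0) →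
        (∀ b b', (∑ a : A, C (a, b) (a, b')) = if b = b' then 1 else 0) →
        ∀ p p' : P, pairSum (TrF R) C p p' = if p = p' then 1 else 0 := by
      intro C hC h1 h2 p p'
      rw [← trace_link]
      exact (hyp C hC h1 h2).2 p p'
    obtain ⟨ht, hZ⟩ := forward_main d hA hB R htr'
    have hdpos : 0 < d := hA ▸ Fintype.card_pos
    have hd0 : (d:ℂ) ≠ 0 := Nat.cast_ne_zero.mpr hdpos.ne'
    have hF0 : (Fintype.card F : ℂ) ≠ 0 := Nat.cast_ne_zero.mpr Fintype.card_ne_zero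
    have hRc : ∀ u v, (starRingEnd ℂ) (R u v) = R v u := fun u v => hR.1.apply v u
    have hTc : ∀ (q : P) (a : A) (b : B) (q' : P) (c : A) (e : B),
        (starRingEnd ℂ) (TrF R q a b q' c e) = TrF R q' c e q a b := by
      intro q a b q' c e
      unfold TrF
      rw [map_sum]
      exact Finset.sum_congr rfl fun f _ => hRc _ _
    set G : Matrix (P × A) (P × A) ℂ := Matrix.of fun x y =>
      ((d : ℂ) * (Fintype.card F : ℂ))⁻¹ * ((∑ b : B, TrF R x.1 x.2 b y.1 y.2 b)
        - (if x.1 = y.1 then 1 else 0) * (if x.2 = y.2 then 1 else 0)) with hGdef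
    set H : Matrix (P × B) (P × B) ℂ := Matrix.of fun x y =>
      ((d : ℂ) * (Fintype.card F : ℂ))⁻¹ * ((∑ a : A, TrF R x.1 a x.2 y.1 a y.2)
        - (if x.1 = y.1 then 1 else 0) * (if x.2 = y.2 then 1 else 0)) with hHdef
    set Gt : Matrix (P × A × B × F) (P × A × B × F) ℂ := Matrix.of (fun u u' =>
      G (u.1, u.2.1) (u'.1, u'.2.1) *
        (if u.2.2.1 = u'.2.2.1 then 1 else 0) * (if u.2.2.2 = u'.2.2.2 then 1 else 0)) with hGtdef
    set Ht : Matrix (P × A × B × F) (P × A × B × F) ℂ := Matrix.of (fun u u' =>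
      H (u.1, u.2.2.1) (u'.1, u'.2.2.1) *
        (if u.2.1 = u'.2.1 then 1 else 0) * (if u.2.2.2 = u'.2.2.2 then 1 else 0)) with hHtdef
    set S : Matrix (P × A × B × F) (P × A × B × F) ℂ :=
      R - ((d : ℂ) * (Fintype.card F : ℂ))⁻¹ • 1 - Gt - Ht with hSdef
    have hGc : ∀ x y, (starRingEnd ℂ) (G x y) = G y x := by
      intro x y
      simp only [hGdef, Matrix.of_apply, _root_.map_mul, map_sub, map_sum, map_inv₀,
        map_natCast, conj_ite, hTc]
      rw [ite_one_swap x.1 y.1, ite_one_swap x.2 y.2]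
    have hHc : ∀ x y, (starRingEnd ℂ) (H x y) = H y x := by
      intro x y
      simp only [hHdef, Matrix.of_apply, _root_.map_mul, map_sub, map_sum, map_inv₀,
        map_natCast, conj_ite, hTc]
      rw [ite_one_swap x.1 y.1, ite_one_swap x.2 y.2]
    have hGherm : G.IsHermitian := by
      unfold Matrix.IsHermitian
      ext u v
      rw [conjTranspose_apply]
      exact hGc v u
    have hHherm : H.IsHermitian := by
      unfold Matrix.IsHermitian
      ext u v
      rw [conjTranspose_apply]
      exact hHc v u
    have hSherm : S.IsHermitian := by
      rw [hSdef]
      refine ((hR.1.sub ?_).sub ?_).sub ?_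
      · unfold Matrix.IsHermitian
        rw [conjTranspose_smul, conjTranspose_one]
        congr 1
        simp [Complex.star_def, map_inv₀, _root_.map_mul, map_natCast]
      · unfold Matrix.IsHermitian
        ext u v
        rw [conjTranspose_apply]
        simp only [hGtdef, Matrix.of_apply, Complex.star_def, _root_.map_mul, conj_ite, hGc]
        rw [ite_one_swap v.2.2.1 u.2.2.1, ite_one_swap v.2.2.2 u.2.2.2]
      · unfold Matrix.IsHermitian
        ext u v
        rw [conjTranspose_apply]
        simp only [hHtdef, Matrix.of_apply, Complex.star_def, _root_.map_mul, conj_ite, hHc]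
        rw [ite_one_swap v.2.1 u.2.1, ite_one_swap v.2.2.2 u.2.2.2]
    have hGtr : ∀ p p', (∑ a : A, G (p, a) (p', a)) = 0 := by
      intro p p'
      simp only [hGdef, Matrix.of_apply]
      rw [← Finset.mul_sum, Finset.sum_sub_distrib, ht p p']
      simp only [eq_self_iff_true, if_true, mul_one, Finset.sum_const, Finset.card_univ, hA,
        nsmul_eq_mul]
      by_cases hp : p = p' <;> simp [hp, hA]
    have hHtr : ∀ p p', (∑ b : B, H (p, b) (p', b)) = 0 := by
      intro p p'
      simp only [hHdef, Matrix.of_apply]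
      rw [← Finset.mul_sum, Finset.sum_sub_distrib, Finset.sum_comm, ht p p']
      simp only [eq_self_iff_true, if_true, mul_one, Finset.sum_const, Finset.card_univ, hB,
        nsmul_eq_mul]
      by_cases hp : p = p' <;> simp [hp, hB]
    have hcancel : (Fintype.card F : ℂ) * ((d:ℂ) * (Fintype.card F : ℂ))⁻¹ = (d:ℂ)⁻¹ := by
      field_simp
    have hStr : ∀ (q : P) (a : A) (b : B) (q' : P) (c : A) (e : B),
        (∑ f : F, S (q, a, b, f) (q', c, e, f)) = 0 := by
      intro q a b q' c e
      simp only [hSdef, Matrix.sub_apply, Finset.sum_sub_distrib]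
      have eone : (∑ f : F, (1 : Matrix (P×A×B×F) (P×A×B×F) ℂ) (q,a,b,f) (q',c,e,f))
          = (if q = q' then (1:ℂ) else 0) * (if a = c then (1:ℂ) else 0)
            * (if b = e then (1:ℂ) else 0) * (Fintype.card F : ℂ) := by
        simp only [Matrix.one_apply, Prod.mk.injEq, and_true]
        by_cases h1 : q = q' <;> by_cases h2 : a = c <;> by_cases h3 : b = e <;>
          simp [h1, h2, h3, Finset.sum_const, Finset.card_univ]
      have s2 : (∑ f : F, (((d:ℂ) * (Fintype.card F : ℂ))⁻¹
            • (1 : Matrix (P×A×B×F) (P×A×B×F) ℂ)) (q,a,b,f) (q',c,e,f))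
          = (d:ℂ)⁻¹ * ((if q = q' then (1:ℂ) else 0) * (if a = c then (1:ℂ) else 0)
            * (if b = e then (1:ℂ) else 0)) := by
        simp only [Matrix.smul_apply, smul_eq_mul]
        rw [← Finset.mul_sum, eone]
        field_simp
      have s3 : (∑ f : F, Gt (q,a,b,f) (q',c,e,f))
          = (Fintype.card F : ℂ) * (G (q,a) (q',c) * (if b = e then (1:ℂ) else 0)) := by
        simp only [hGtdef, Matrix.of_apply]
        simp [Finset.sum_const, Finset.card_univ]
        try ring
      have s4 : (∑ f : F, Ht (q,a,b,f) (q',c,e,f))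
          = (Fintype.card F : ℂ) * (H (q,b) (q',e) * (if a = c then (1:ℂ) else 0)) := by
        simp only [hHtdef, Matrix.of_apply]
        simp [Finset.sum_const, Finset.card_univ]
        try ring
      rw [s2, s3, s4]
      simp only [hGdef, hHdef, Matrix.of_apply]
      have hzz := hZ q a b q' c e
      have expandTrF : (∑ f : F, R (q, a, b, f) (q', c, e, f)) = TrF R q a b q' c e := rfl
      rw [expandTrF]
      linear_combination hzz - ((∑ β : B, TrF R q a β q' c β)
          - (if q = q' then (1:ℂ) else 0) * (if a = c then (1:ℂ) else 0))
          * (if b = e then (1:ℂ) else 0) * hcancel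
        - ((∑ α : A, TrF R q α b q' α e)
          - (if q = q' then (1:ℂ) else 0) * (if b = e then (1:ℂ) else 0))
          * (if a = c then (1:ℂ) else 0) * hcancel
    refine ⟨S, G, H, hSherm, hStr, hGherm, hGtr, hHherm, hHtr, ?_⟩
    rw [← hGtdef, ← hHtdef, hSdef]
    abel
  · rintro ⟨S, G, H, hS, hStr, hG, hGtr, hH, hHtr, hReq⟩
    intro C hC hrow hcol
    refine ⟨link_psd R C hR hC, fun p p' => ?_⟩
    rw [trace_link]
    have hdpos : 0 < d := hA ▸ Fintype.card_pos
    have hd0 : (d:ℂ) ≠ 0 := Nat.cast_ne_zero.mpr hdpos.ne'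
    have hF0 : (Fintype.card F : ℂ) ≠ 0 := Nat.cast_ne_zero.mpr Fintype.card_ne_zero
    have hRf : ∀ (q : P) (a : A) (b : B) (q' : P) (c : A) (e : B), TrF R q a b q' c e =
        (d:ℂ)⁻¹ * ((if q = q' then (1:ℂ) else 0) * (if a = c then (1:ℂ) else 0)
          * (if b = e then (1:ℂ) else 0))
        + (Fintype.card F : ℂ) * G (q,a) (q',c) * (if b = e then (1:ℂ) else 0)
        + (Fintype.card F : ℂ) * H (q,b) (q',e) * (if a = c then (1:ℂ) else 0) := by
      intro q a b q' c e
      unfold TrF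
      rw [hReq]
      simp only [Matrix.add_apply, Matrix.smul_apply, Matrix.of_apply, smul_eq_mul,
        Finset.sum_add_distrib]
      have eone : (∑ f : F, (1 : Matrix (P×A×B×F) (P×A×B×F) ℂ) (q,a,b,f) (q',c,e,f))
          = (if q = q' then (1:ℂ) else 0) * (if a = c then (1:ℂ) else 0)
            * (if b = e then (1:ℂ) else 0) * (Fintype.card F : ℂ) := by
        simp only [Matrix.one_apply, Prod.mk.injEq, and_true]
        by_cases h1 : q = q' <;> by_cases h2 : a = c <;> by_cases h3 : b = e <;>
          simp [h1, h2, h3, Finset.sum_const, Finset.card_univ]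
      have e1 : (∑ f : F, ((d:ℂ) * (Fintype.card F : ℂ))⁻¹
            * (1 : Matrix (P×A×B×F) (P×A×B×F) ℂ) (q,a,b,f) (q',c,e,f))
          = (d:ℂ)⁻¹ * ((if q = q' then (1:ℂ) else 0) * (if a = c then (1:ℂ) else 0)
            * (if b = e then (1:ℂ) else 0)) := by
        rw [← Finset.mul_sum, eone]
        field_simp
      rw [e1, hStr q a b q' c e]
      simp only [if_true, eq_self_iff_true, mul_one]
      simp [Finset.sum_const, Finset.card_univ]
      try ring
    unfold pairSum
    simp only [hRf, add_mul, Finset.sum_add_distrib]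
    have hT1 : (∑ a : A, ∑ b : B, ∑ c : A, ∑ e : B,
        (d:ℂ)⁻¹ * ((if p = p' then (1:ℂ) else 0) * (if a = c then (1:ℂ) else 0)
          * (if b = e then (1:ℂ) else 0)) * C (a,b) (c,e))
        = if p = p' then 1 else 0 := by
      by_cases hp : p = p'
      · simp only [hp, if_pos rfl]
        have step : ∀ (a : A) (b : B), (∑ c : A, ∑ e : B,
            (d:ℂ)⁻¹ * ((1:ℂ) * (if a = c then (1:ℂ) else 0) * (if b = e then (1:ℂ) else 0))
              * C (a,b) (c,e)) = (d:ℂ)⁻¹ * C (a,b) (a,b) := by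
          intro a b
          rw [← collapse2 a b (fun c e => (d:ℂ)⁻¹ * C (a,b) (c,e))]
          · refine Finset.sum_congr rfl fun c _ => Finset.sum_congr rfl fun e _ => by ring

        calc (∑ a : A, ∑ b : B, ∑ c : A, ∑ e : B,
            (d:ℂ)⁻¹ * ((1:ℂ) * (if a = c then (1:ℂ) else 0) * (if b = e then (1:ℂ) else 0))
              * C (a,b) (c,e))
            = ∑ a : A, ∑ b : B, (d:ℂ)⁻¹ * C (a,b) (a,b) := by
              exact Finset.sum_congr rfl fun a _ => Finset.sum_congr rfl fun b _ => step a b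
          _ = (d:ℂ)⁻¹ * ∑ a : A, ∑ b : B, C (a,b) (a,b) := by
              simp [Finset.mul_sum]
          _ = (d:ℂ)⁻¹ * ∑ a : A, (1:ℂ) := by
              rw [Finset.mul_sum, Finset.mul_sum]
              refine Finset.sum_congr rfl fun a _ => ?_
              rw [hrow a a]
              simp
          _ = 1 := by
              simp [Finset.sum_const, Finset.card_univ, hA]
              exact inv_mul_cancel₀ hd0
      · simp [hp]
    have hT2 : (∑ a : A, ∑ b : B, ∑ c : A, ∑ e : B,
        (Fintype.card F : ℂ) * G (p,a) (p',c) * (if b = e then (1:ℂ) else 0) * C (a,b) (c,e))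
        = 0 := by
      have step : ∀ (a : A) (c : A), (∑ b : B, ∑ e : B,
          (Fintype.card F : ℂ) * G (p,a) (p',c) * (if b = e then (1:ℂ) else 0) * C (a,b) (c,e))
          = (Fintype.card F : ℂ) * G (p,a) (p',c) * (if a = c then (1:ℂ) else 0) := by
        intro a c
        have inner : ∀ b : B, (∑ e : B,
            (Fintype.card F : ℂ) * G (p,a) (p',c) * (if b = e then (1:ℂ) else 0) * C (a,b) (c,e))
            = (Fintype.card F : ℂ) * G (p,a) (p',c) * C (a,b) (c,b) := by
          intro b
          rw [← collapse_right b (fun e => (Fintype.card F : ℂ) * G (p,a) (p',c) * C (a,b) (c,e))]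
          exact Finset.sum_congr rfl fun e _ => by ring
        calc (∑ b : B, ∑ e : B, (Fintype.card F : ℂ) * G (p,a) (p',c)
              * (if b = e then (1:ℂ) else 0) * C (a,b) (c,e))
            = ∑ b : B, (Fintype.card F : ℂ) * G (p,a) (p',c) * C (a,b) (c,b) :=
              Finset.sum_congr rfl fun b _ => inner b
          _ = (Fintype.card F : ℂ) * G (p,a) (p',c) * ∑ b : B, C (a,b) (c,b) := by
              rw [Finset.mul_sum]
          _ = (Fintype.card F : ℂ) * G (p,a) (p',c) * (if a = c then (1:ℂ) else 0) := by
              rw [hrow a c]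
      calc (∑ a : A, ∑ b : B, ∑ c : A, ∑ e : B,
          (Fintype.card F : ℂ) * G (p,a) (p',c) * (if b = e then (1:ℂ) else 0) * C (a,b) (c,e))
          = ∑ a : A, ∑ c : A, ∑ b : B, ∑ e : B,
            (Fintype.card F : ℂ) * G (p,a) (p',c) * (if b = e then (1:ℂ) else 0) * C (a,b) (c,e) := by
            refine Finset.sum_congr rfl fun a _ => ?_
            exact Finset.sum_comm
        _ = ∑ a : A, ∑ c : A, (Fintype.card F : ℂ) * G (p,a) (p',c) * (if a = c then (1:ℂ) else 0) :=
            Finset.sum_congr rfl fun a _ => Finset.sum_congr rfl fun c _ => step a c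
        _ = ∑ a : A, (Fintype.card F : ℂ) * G (p,a) (p',a) := by
            refine Finset.sum_congr rfl fun a _ => ?_
            rw [← collapse_right a (fun c => (Fintype.card F : ℂ) * G (p,a) (p',c))]
            exact Finset.sum_congr rfl fun c _ => by ring
        _ = (Fintype.card F : ℂ) * ∑ a : A, G (p,a) (p',a) := by rw [Finset.mul_sum]
        _ = 0 := by rw [hGtr p p', mul_zero]
    have hT3 : (∑ a : A, ∑ b : B, ∑ c : A, ∑ e : B,
        (Fintype.card F : ℂ) * H (p,b) (p',e) * (if a = c then (1:ℂ) else 0) * C (a,b) (c,e))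
        = 0 := by
      have step1 : ∀ (a : A) (b : B), (∑ c : A, ∑ e : B,
          (Fintype.card F : ℂ) * H (p,b) (p',e) * (if a = c then (1:ℂ) else 0) * C (a,b) (c,e))
          = ∑ e : B, (Fintype.card F : ℂ) * H (p,b) (p',e) * C (a,b) (a,e) := by
        intro a b
        rw [Finset.sum_comm]
        refine Finset.sum_congr rfl fun e _ => ?_
        rw [← collapse_right a (fun c => (Fintype.card F : ℂ) * H (p,b) (p',e) * C (a,b) (c,e))]
        exact Finset.sum_congr rfl fun c _ => by ring
      calc (∑ a : A, ∑ b : B, ∑ c : A, ∑ e : B,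
          (Fintype.card F : ℂ) * H (p,b) (p',e) * (if a = c then (1:ℂ) else 0) * C (a,b) (c,e))
          = ∑ a : A, ∑ b : B, ∑ e : B,
            (Fintype.card F : ℂ) * H (p,b) (p',e) * C (a,b) (a,e) :=
            Finset.sum_congr rfl fun a _ => Finset.sum_congr rfl fun b _ => step1 a b
        _ = ∑ b : B, ∑ e : B, ∑ a : A,
            (Fintype.card F : ℂ) * H (p,b) (p',e) * C (a,b) (a,e) :=
            sum_swap13 (fun (a : A) (b : B) (e : B) =>
              (Fintype.card F : ℂ) * H (p,b) (p',e) * C (a,b) (a,e))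
        _ = ∑ b : B, ∑ e : B,
            (Fintype.card F : ℂ) * H (p,b) (p',e) * (if b = e then (1:ℂ) else 0) := by
            refine Finset.sum_congr rfl fun b _ => Finset.sum_congr rfl fun e _ => ?_
            rw [← Finset.mul_sum, hcol b e]
        _ = ∑ b : B, (Fintype.card F : ℂ) * H (p,b) (p',b) := by
            refine Finset.sum_congr rfl fun b _ => ?_
            rw [← collapse_right b (fun e => (Fintype.card F : ℂ) * H (p,b) (p',e))]
            exact Finset.sum_congr rfl fun e _ => by ring
        _ = (Fintype.card F : ℂ) * ∑ b : B, H (p,b) (p',b) := by rw [Finset.mul_sum]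
        _ = 0 := by rw [hHtr p p', mul_zero]
    rw [hT1, hT2, hT3]
    ring
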